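/- Let Z be a finite type, and for each z, z' ∈ Z let A_{z}, B_{z'}, C_z, D_{z'} be events with joint probabilities satisfying P(A_z ∩ B_{z'}ᶜ ∩ C_z ∩ D_{z'}) well-defined. Suppose the events {C_z}_z partition a set of full counterfactual mass and likewise {D_{z'}}. Then Σ_z Σ_{z'} P(Y(t,z)=y, Y(t',z')=y') · P(Z(t)=z, Z(t')=z') ≤ Σ_z Σ_{z'} min(P(Y(t,z)=y), P(Y(t',z')=y')) · min(P(Z(t)=z), P(Z(t')=z')). In particular PNS ≤ Σ_z Σ_{z'} min(P(y|z,t), P(y'|z',t'))·min(P(z_t), P(z'_{t'})). -/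
import Mathlib


open MeasureTheory

/-- Mediator bound on PNS. With events A z = {Y(t,z)=y},
B z' = {Y(t',z')=y'}, C z = {Z(t)=z}, D z' = {Z(t')=z'} over a finite mediator
value space Z:
Σ_z Σ_{z'} P(A z ∩ B z')·P(C z ∩ D z')
  ≤ Σ_z Σ_{z'} min(P(A z), P(B z'))·min(P(C z), P(D z')). -/
theorem stmt10 {Ω : Type*} [MeasurableSpace Ω] (μ : Measure Ω) [IsProbabilityMeasure μ]
    {Z : Type*} [Fintype Z]
    (A B C D : Z → Set Ω)
    (hA : ∀ z, MeasurableSet (A z)) (hB : ∀ z, MeasurableSet (B z))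
    (hC : ∀ z, MeasurableSet (C z)) (hD : ∀ z, MeasurableSet (D z)) :
    ∑ z, ∑ z', (μ (A z ∩ B z')).toReal * (μ (C z ∩ D z')).toReal
      ≤ ∑ z, ∑ z', min (μ (A z)).toReal (μ (B z')).toReal
          * min (μ (C z)).toReal (μ (D z')).toReal := by
  refine Finset.sum_le_sum fun z _ => Finset.sum_le_sum fun z' _ => ?_
  have key : ∀ (S T : Set Ω), (μ (S ∩ T)).toReal ≤ min (μ S).toReal (μ T).toReal := by
    intro S T
    refine le_min ?_ ?_ <;> exact ENNReal.toReal_mono (measure_ne_top μ _)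
      (measure_mono (by simp [Set.inter_subset_left, Set.inter_subset_right]))
  exact mul_le_mul (key _ _) (key _ _) ENNReal.toReal_nonneg
    (le_min ENNReal.toReal_nonneg ENNReal.toReal_nonneg)
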